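/- Every nonzero ideal of R is generated by at most two elements: for every nonzero ideal I of R there exist g, h ∈ I with I equal to the ideal generated by {g, h}. -/

import Mathlib

open UniqueFactorizationMonoid

section Aux

variable {R : Type*} [CommRing R] [IsDomain R] [IsDedekindDomain R]

/-- In a Dedekind domain, a prime power `P ^ (count P (normalizedFactors I))` divides `I`. -/
lemma aux_pow_count_dvd [DecidableEq (Ideal R)] {I P : Ideal R} (hI : I ≠ ⊥) (hP : Prime P) :
    P ^ (normalizedFactors I).count P ∣ I := by
  rw [dvd_iff_normalizedFactors_le_normalizedFactors (pow_ne_zero _ hP.ne_zero) hI,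
    normalizedFactors_of_irreducible_pow hP.irreducible, normalize_eq,
    ← Multiset.le_count_iff_replicate_le]

end Aux

/-- In a Dedekind domain `R`, every nonzero ideal is generated by at most two
elements. -/
theorem nonzero_ideal_two_generated
    (R : Type*) [CommRing R] [IsDomain R] [IsDedekindDomain R]
    (I : Ideal R) (hI : I ≠ ⊥) :
    ∃ g h : R, g ∈ I ∧ h ∈ I ∧ I = Ideal.span {g, h} := by
  classical
  obtain ⟨g, hgI, hg0⟩ := Submodule.exists_mem_ne_zero_of_ne_bot hI
  have hg : Ideal.span {g} ≠ ⊥ := by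
    simpa only [ne_eq, Ideal.span_singleton_eq_bot] using hg0
  have hIg : I ∣ Ideal.span {g} := Ideal.dvd_span_singleton.mpr hgI
  have hnfle : normalizedFactors I ≤ normalizedFactors (Ideal.span {g}) :=
    (dvd_iff_normalizedFactors_le_normalizedFactors hI hg).mp hIg
  set s : Finset (Ideal R) := (normalizedFactors (Ideal.span {g})).toFinset with hs
  have hsP : ∀ P ∈ s, Prime P := fun P hP =>
    prime_of_normalized_factor P (Multiset.mem_toFinset.mp hP)
  set e : Ideal R → ℕ := fun P => (normalizedFactors I).count P with he
  -- choose elements of exact valuation `e P` at each prime `P ∈ s`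
  have hx : ∀ P ∈ s, ∃ x : R, x ∈ P ^ e P ∧ x ∉ P ^ (e P + 1) := by
    intro P hP
    have hprime := hsP P hP
    haveI : P.IsPrime := Ideal.isPrime_of_prime hprime
    obtain ⟨x, hx1, hx2⟩ := Ideal.exists_mem_pow_notMem_pow_succ P hprime.ne_zero
      (Ideal.IsPrime.ne_top ‹P.IsPrime›) (e P)
    exact ⟨x, hx1, hx2⟩
  choose! x hx1 hx2 using hx
  -- CRT: find `y ≡ x P  mod P ^ (e P + 1)` for all `P ∈ s`
  obtain ⟨y, hy⟩ := IsDedekindDomain.exists_forall_sub_mem_ideal (s := s) id (fun P => e P + 1)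
    (fun P hP => hsP P hP) (fun _ _ _ _ hij hPQ => hij hPQ) (fun P => x P)
  have hy1 : ∀ P ∈ s, y ∈ P ^ e P := by
    intro P hP
    have : y - x P ∈ P ^ (e P + 1) := hy P hP
    have h2 : y - x P ∈ P ^ e P := Ideal.pow_le_pow_right (Nat.le_succ _) this
    simpa using add_mem h2 (hx1 P hP)
  have hy2 : ∀ P ∈ s, y ∉ P ^ (e P + 1) := by
    intro P hP hmem
    exact hx2 P hP (by simpa using sub_mem hmem (hy P hP))
  -- `y ∈ I`
  have hIeq : ∏ P ∈ (normalizedFactors I).toFinset, P ^ e P = I := by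
    calc ∏ P ∈ (normalizedFactors I).toFinset, P ^ e P
        = (normalizedFactors I).prod := (Finset.prod_multiset_count _).symm
      _ = I := associated_iff_eq.mp (prod_normalizedFactors hI)
  have hsub : (normalizedFactors I).toFinset ⊆ s := fun P hP =>
    Multiset.mem_toFinset.mpr (Multiset.mem_of_le hnfle (Multiset.mem_toFinset.mp hP))
  have hyI : y ∈ I := by
    rw [← hIeq, ← IsDedekindDomain.inf_prime_pow_eq_prod _ _ _
      (fun P hP => prime_of_normalized_factor P (Multiset.mem_toFinset.mp hP))
      (fun _ _ _ _ hij hPQ => hij hPQ)]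
    exact Submodule.mem_finsetInf.mpr fun P hP => hy1 P (hsub hP)
  -- the ideal generated by `g` and `y` equals `I`
  refine ⟨g, y, hgI, hyI, ?_⟩
  set J : Ideal R := Ideal.span {g} ⊔ Ideal.span {y} with hJ
  have hspan : Ideal.span ({g, y} : Set R) = J := by
    rw [hJ, Ideal.span_insert]
  rw [hspan]
  have hJI : J ≤ I := sup_le ((Ideal.span_singleton_le_iff_mem I).mpr hgI)
    ((Ideal.span_singleton_le_iff_mem I).mpr hyI)
  have hJ0 : J ≠ ⊥ := fun h => hg (le_bot_iff.mp (h ▸ (le_sup_left : Ideal.span {g} ≤ J)))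
  have hJg : J ∣ Ideal.span {g} := Ideal.dvd_iff_le.mpr le_sup_left
  -- key : `J ∣ I`
  have hJdvd : J ∣ I := by
    rw [dvd_iff_normalizedFactors_le_normalizedFactors hJ0 hI, Multiset.le_iff_count]
    intro P
    by_cases hPJ : P ∈ normalizedFactors J
    · have hprime : Prime P := prime_of_normalized_factor P hPJ
      haveI : P.IsPrime := Ideal.isPrime_of_prime hprime
      by_cases hPs : P ∈ s
      · -- count P (nf J) = e P
        have hle : J ≤ P ^ e P := by
          exact sup_le (le_trans ((Ideal.span_singleton_le_iff_mem I).mpr hgI)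
              (Ideal.le_of_dvd (aux_pow_count_dvd hI hprime)))
            ((Ideal.span_singleton_le_iff_mem _).mpr (hy1 P hPs))
        have hlt : ¬J ≤ P ^ (e P + 1) := fun hcon =>
          hy2 P hPs (hcon (le_sup_right (a := Ideal.span {g})
            (Ideal.mem_span_singleton_self y)))
        rw [Ideal.count_normalizedFactors_eq hle hlt]
      · -- P not a factor of (g), contradiction with P ∈ nf J ≤ nf (g)
        exact absurd (Multiset.mem_toFinset.mpr (Multiset.mem_of_le
          ((dvd_iff_normalizedFactors_le_normalizedFactors hJ0 hg).mp hJg) hPJ)) hPs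
    · rw [Multiset.count_eq_zero_of_notMem hPJ]
      exact Nat.zero_le _
  exact le_antisymm (Ideal.le_of_dvd hJdvd) hJI
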